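/- arXiv:2007.13710 — 2 statements merged into one kernel-verified Lean document; each statement's English description precedes it below -/
import Mathlib

section
/- Let G = (Γ, R, B) be a chromatically invariant 2-edge-coloured graph with R ≠ ∅ and B ≠ ∅. Suppose the vertex set V admits a partition into two non-empty sets X and Y such that every vertex of X is adjacent in Γ to every vertex of Y, and neither the subgraph of Γ induced on X nor the subgraph of Γ induced on Y is a join. Then all edges of Γ with one end in X and one end in Y lie in R, or all of them lie in B. -/
open SimpleGraph Polynomial

/-- A `k`-colouring of a mixed 2-edge-coloured graph with red edge graph `R`,
blue edge graph `B`, and extra uncoloured edge graph `F`. -/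
def IsMixedColouring {V : Type*} (R B F : SimpleGraph V) {k : ℕ} (c : V → Fin k) : Prop :=
  (∀ u v, (R ⊔ B ⊔ F).Adj u v → c u ≠ c v) ∧
  (∀ u x v y, R.Adj u x → B.Adj v y → c u = c v → c x ≠ c y)

/-- The number of `k`-colourings of the mixed 2-edge-coloured graph `(R, B, F)`. -/
noncomputable def numColourings {V : Type*} (R B F : SimpleGraph V) (k : ℕ) : ℕ :=
  Nat.card {c : V → Fin k // IsMixedColouring R B F c}

/-- A bichromatic 2-path `(x, u, y)`: `xu` red, `uy` blue, `xy` not an edge of `S(M)`. -/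
def IsBiPath {V : Type*} (R B F : SimpleGraph V) (x u y : V) : Prop :=
  R.Adj x u ∧ B.Adj u y ∧ ¬(R ⊔ B ⊔ F).Adj x y

/-- The number of bichromatic 2-paths. -/
noncomputable def numBiPaths {V : Type*} (R B F : SimpleGraph V) : ℕ :=
  Nat.card {p : V × V × V // IsBiPath R B F p.1 p.2.1 p.2.2}

/-- The graph `Λ(M)`: all edges of `S(M)` plus edges joining the ends of
bichromatic 2-paths. -/
def LambdaGraph {V : Type*} (R B F : SimpleGraph V) : SimpleGraph V where
  Adj a b := a ≠ b ∧ ((R ⊔ B ⊔ F).Adj a b ∨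
    ∃ w, IsBiPath R B F a w b ∨ IsBiPath R B F b w a)
  symm := by
    constructor
    rintro a b ⟨hab, h⟩
    refine ⟨hab.symm, ?_⟩
    rcases h with h | ⟨w, h⟩
    · exact Or.inl h.symm
    · exact Or.inr ⟨w, h.symm⟩
  loopless := ⟨fun a h => h.1 rfl⟩

/-- `(p.1, p.2)` is a pair of obstructing edges: `p.1` a red edge `ux`, `p.2` a blue edge
`vy`, with the subgraph of `Λ` induced on `{u, x, v, y}` of chromatic number 2. -/
def IsObstructingPair {V : Type*} (R B F : SimpleGraph V) (p : Sym2 V × Sym2 V) : Prop :=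
  ∃ u x v y : V, p.1 = s(u, x) ∧ p.2 = s(v, y) ∧ R.Adj u x ∧ B.Adj v y ∧
    (SimpleGraph.induce {u, x, v, y} (LambdaGraph R B F)).chromaticNumber = 2

/-- The number of pairs of obstructing edges. -/
noncomputable def numObstructing {V : Type*} (R B F : SimpleGraph V) : ℕ :=
  Nat.card {p : Sym2 V × Sym2 V // IsObstructingPair R B F p}

/-- The number of 3-element vertex subsets inducing a triangle. -/
noncomputable def numTriangles {V : Type*} (G : SimpleGraph V) : ℕ :=
  Nat.card {s : Finset V // s.card = 3 ∧ ∀ a ∈ s, ∀ b ∈ s, a ≠ b → G.Adj a b}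

/-- A 2-edge-coloured graph is chromatically invariant when for each `k` its number of
`k`-colourings equals the number of proper `k`-colourings of the underlying graph. -/
def ChromaticallyInvariant {V : Type*} (R B : SimpleGraph V) : Prop :=
  ∀ k : ℕ, Nat.card {c : V → Fin k // IsMixedColouring R B ⊥ c} =
    Nat.card {c : V → Fin k // ∀ u v, (R ⊔ B).Adj u v → c u ≠ c v}

/-- A graph is a join when its vertex set has a partition into two non-empty parts with
every vertex of one part adjacent to every vertex of the other. -/
def IsJoin {W : Type*} (G : SimpleGraph W) : Prop :=
  ∃ X Y : Set W, X.Nonempty ∧ Y.Nonempty ∧ Disjoint X Y ∧ X ∪ Y = Set.univ ∧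
    ∀ x ∈ X, ∀ y ∈ Y, G.Adj x y

/-- Disjoint union of two simple graphs. -/
def disjUnion {α β : Type*} (G : SimpleGraph α) (H : SimpleGraph β) :
    SimpleGraph (α ⊕ β) where
  Adj a b := match a, b with
    | Sum.inl a, Sum.inl b => G.Adj a b
    | Sum.inr a, Sum.inr b => H.Adj a b
    | _, _ => False
  symm := by constructor; rintro (a | a) (b | b) h <;> simp_all <;> exact h.symm
  loopless := by constructor; rintro (a | a) h <;> exact (SimpleGraph.irrefl _) h

/-- The complete bipartite "cross" graph between the two sides of a sum type. -/
def crossGraph (α β : Type*) : SimpleGraph (α ⊕ β) where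
  Adj a b := match a, b with
    | Sum.inl _, Sum.inr _ => True
    | Sum.inr _, Sum.inl _ => True
    | _, _ => False
  symm := by constructor; rintro (a | a) (b | b) h <;> trivial
  loopless := by constructor; rintro (a | a) h <;> exact h
open Relation

/-- Every proper colouring of a chromatically invariant graph is a mixed colouring. -/
private lemma mixed_of_proper {V : Type*} [Fintype V] (R B : SimpleGraph V)
    (hInv : ChromaticallyInvariant R B) {k : ℕ} (c : V → Fin k)
    (hc : ∀ u v, (R ⊔ B).Adj u v → c u ≠ c v) : IsMixedColouring R B ⊥ c := by
  classical
  have hsub : {d : V → Fin k | IsMixedColouring R B ⊥ d} ⊆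
      {d : V → Fin k | ∀ u v, (R ⊔ B).Adj u v → d u ≠ d v} := by
    intro d hd u v h
    exact hd.1 u v (by simpa using h)
  have h1 : ({d : V → Fin k | IsMixedColouring R B ⊥ d}).ncard =
      ({d : V → Fin k | ∀ u v, (R ⊔ B).Adj u v → d u ≠ d v}).ncard := by
    rw [← Nat.card_coe_set_eq, ← Nat.card_coe_set_eq]
    exact hInv k
  have heq := Set.eq_of_subset_of_ncard_le hsub h1.ge (Set.toFinite _)
  exact heq.superset (show c ∈ _ from hc)

/-- Key violation lemma: a red and a blue edge sharing an endpoint on one side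
whose other endpoints are non-adjacent contradict chromatic invariance. -/
private lemma key_lemma {V : Type*} [Fintype V] {R B : SimpleGraph V}
    (hInv : ChromaticallyInvariant R B) {x x' y : V} (hne : x ≠ x')
    (hnadj : ¬ (R ⊔ B).Adj x x') (hr : R.Adj x y) (hb : B.Adj x' y) : False := by
  classical
  let e := Fintype.equivFin V
  set c : V → Fin (Fintype.card V) := fun v => e (if v = x' then x else v) with hcdef
  have hproper : ∀ u v, (R ⊔ B).Adj u v → c u ≠ c v := by
    intro u v huv hcuv
    have hne' : u ≠ v := huv.ne
    have h2 : (if u = x' then x else u) = (if v = x' then x else v) := e.injective hcuv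
    split_ifs at h2 with hu hv hv
    · exact hne' (hu.trans hv.symm)
    · subst hu; subst h2; exact hnadj huv.symm
    · subst hv; subst h2; exact hnadj huv
    · exact hne' h2
  have hm := mixed_of_proper R B hInv c hproper
  have hxx' : c x = c x' := by
    simp only [hcdef, if_pos rfl]
    congr 1
    split_ifs with h
    · rfl
    · rfl
  exact hm.2 x y x' y hr hb hxx' rfl

/-- If the induced graph on `X` is not a join, then the complement of the induced
graph is connected: any two vertices of `X` are linked. -/
private lemma comp_reach {V : Type*} {G : SimpleGraph V} {X : Set V}
    (hXnj : ¬ IsJoin (SimpleGraph.induce X G)) (x x' : X) :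
    ReflTransGen (fun a b : X => a ≠ b ∧ ¬ G.Adj ↑a ↑b) x x' := by
  by_contra h
  apply hXnj
  refine ⟨{a : X | ReflTransGen (fun a b : X => a ≠ b ∧ ¬ G.Adj ↑a ↑b) x a},
    {a : X | ReflTransGen (fun a b : X => a ≠ b ∧ ¬ G.Adj ↑a ↑b) x a}ᶜ,
    ⟨x, ReflTransGen.refl⟩, ⟨x', h⟩, disjoint_compl_right, Set.union_compl_self _, ?_⟩
  intro a ha b hb
  have hab : a ≠ b := fun e => hb (e ▸ ha)
  by_contra hnadj
  exact hb (ha.tail ⟨hab, fun hg => hnadj ((SimpleGraph.comap_adj).mpr hg)⟩)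

private lemma reach_const {α : Type*} {r : α → α → Prop} {P : α → Prop}
    (hstep : ∀ a b, r a b → P a → P b) {x x' : α}
    (h : ReflTransGen r x x') (hx : P x) : P x' := by
  induction h with
  | refl => exact hx
  | tail _ h2 ih => exact hstep _ _ h2 ih

/-- In a non-trivial chromatically invariant 2-edge-coloured graph whose underlying graph
is the join of two graphs neither of which is a join, all joining edges get the same
colour. -/
theorem joining_edges_monochromatic
    {V : Type*} [Fintype V] (R B : SimpleGraph V) (hRB : Disjoint R B)
    (hInv : ChromaticallyInvariant R B) (hR : R ≠ ⊥) (hB : B ≠ ⊥)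
    (X Y : Set V) (hX : X.Nonempty) (hY : Y.Nonempty) (hdisj : Disjoint X Y)
    (hcover : X ∪ Y = Set.univ)
    (hjoin : ∀ x ∈ X, ∀ y ∈ Y, (R ⊔ B).Adj x y)
    (hXnj : ¬ IsJoin (SimpleGraph.induce X (R ⊔ B)))
    (hYnj : ¬ IsJoin (SimpleGraph.induce Y (R ⊔ B))) :
    (∀ x ∈ X, ∀ y ∈ Y, (R ⊔ B).Adj x y → R.Adj x y) ∨
    (∀ x ∈ X, ∀ y ∈ Y, (R ⊔ B).Adj x y → B.Adj x y) := by
  classical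
  obtain ⟨x0, hx0⟩ := hX
  obtain ⟨y0, hy0⟩ := hY
  have crossR : ∀ {x y : V}, x ∈ X → y ∈ Y → ¬ B.Adj x y → R.Adj x y := by
    intro x y hx hy hb
    exact (hjoin x hx y hy).resolve_right hb
  have crossB : ∀ {x y : V}, x ∈ X → y ∈ Y → ¬ R.Adj x y → B.Adj x y := by
    intro x y hx hy hr
    exact (hjoin x hx y hy).resolve_left hr
  -- step lemmas along complement edges in X
  have stepXR : ∀ (y : V), y ∈ Y → ∀ a b : X,
      (a ≠ b ∧ ¬ (R ⊔ B).Adj ↑a ↑b) → R.Adj ↑a y → R.Adj ↑b y := by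
    intro y hy a b ⟨hab, hnadj⟩ hr
    refine crossR b.2 hy fun hb => ?_
    exact key_lemma hInv (fun h => hab (Subtype.ext h)) hnadj hr hb
  have stepXB : ∀ (y : V), y ∈ Y → ∀ a b : X,
      (a ≠ b ∧ ¬ (R ⊔ B).Adj ↑a ↑b) → B.Adj ↑a y → B.Adj ↑b y := by
    intro y hy a b ⟨hab, hnadj⟩ hb
    refine crossB b.2 hy fun hr => ?_
    exact key_lemma hInv (fun h => hab (Subtype.ext h.symm))
      (fun h => hnadj h.symm) hr hb
  -- step lemmas along complement edges in Y
  have stepYR : ∀ (x : V), x ∈ X → ∀ a b : Y,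
      (a ≠ b ∧ ¬ (R ⊔ B).Adj ↑a ↑b) → R.Adj x ↑a → R.Adj x ↑b := by
    intro x hx a b ⟨hab, hnadj⟩ hr
    refine (crossR hx b.2 fun hb => ?_)
    exact key_lemma hInv (fun h => hab (Subtype.ext h)) hnadj hr.symm hb.symm
  have stepYB : ∀ (x : V), x ∈ X → ∀ a b : Y,
      (a ≠ b ∧ ¬ (R ⊔ B).Adj ↑a ↑b) → B.Adj x ↑a → B.Adj x ↑b := by
    intro x hx a b ⟨hab, hnadj⟩ hb
    refine (crossB hx b.2 fun hr => ?_)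
    exact key_lemma hInv (fun h => hab (Subtype.ext h.symm))
      (fun h => hnadj h.symm) hr.symm hb.symm
  rcases hjoin x0 hx0 y0 hy0 with hr0 | hb0
  · left
    intro x hx y hy _
    have h1 : R.Adj x y0 :=
      reach_const (stepXR y0 hy0) (comp_reach hXnj ⟨x0, hx0⟩ ⟨x, hx⟩) hr0
    exact reach_const (stepYR x hx) (comp_reach hYnj ⟨y0, hy0⟩ ⟨y, hy⟩) h1
  · right
    intro x hx y hy _
    have h1 : B.Adj x y0 :=
      reach_const (stepXB y0 hy0) (comp_reach hXnj ⟨x0, hx0⟩ ⟨x, hx⟩) hb0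
    exact reach_const (stepYB x hx) (comp_reach hYnj ⟨y0, hy0⟩ ⟨y, hy⟩) h1
end

section
/- For every real number r and every real ε > 0 there exists a 2-edge-coloured graph G = (Γ, R, B) with R ≠ ∅ and B ≠ ∅ and a real number a with |r − a| < ε such that the chromatic polynomial P of G satisfies P(a) = 0 (P evaluated as a polynomial over the reals). In other words, the real roots of chromatic polynomials of bichromatic 2-edge-coloured graphs are dense in ℝ. -/
open SimpleGraph Polynomial

set_option maxRecDepth 4000
set_option linter.unnecessarySeqFocus false
section Aux
attribute [local instance] Classical.propDecidable
variable {k : ℕ}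

variable {k : ℕ}

-- dummy copies of part1 decls via import trick: we just concatenate files later.
open Polynomial Finset

variable {k : ℕ}

/-- validity of a path colouring relative to a forbidden set `S`. -/
def pathOK (S : Finset (Fin k)) {m : ℕ} (c : Fin (m + 1) → Fin k) : Prop :=
  ∀ i : ℕ, ∀ h : i + 1 < m + 1,
    c ⟨i, Nat.lt_of_succ_lt h⟩ ≠ c ⟨i + 1, h⟩ ∧
    ¬(c ⟨i, Nat.lt_of_succ_lt h⟩ ∈ S ∧ c ⟨i + 1, h⟩ ∈ S)

lemma pathOK_cons (S : Finset (Fin k)) {m : ℕ} (x : Fin k) (c : Fin (m + 1) → Fin k) :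
    pathOK S (Fin.cons x c) ↔
      pathOK S c ∧ (x ≠ c 0 ∧ ¬(x ∈ S ∧ c 0 ∈ S)) := by
  constructor
  · intro H
    refine ⟨?_, ?_⟩
    · intro i h
      have H' := H (i + 1) (by omega)
      rw [show (⟨i + 1, Nat.lt_of_succ_lt (by omega)⟩ : Fin (m + 2)) = Fin.succ ⟨i, by omega⟩
          from rfl,
        show (⟨i + 1 + 1, by omega⟩ : Fin (m + 2)) = Fin.succ ⟨i + 1, h⟩ from rfl,
        Fin.cons_succ, Fin.cons_succ] at H'
      exact H'
    · have H' := H 0 (by omega)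
      rw [show (⟨0, Nat.lt_of_succ_lt (by omega)⟩ : Fin (m + 2)) = 0 from rfl,
        show (⟨0 + 1, by omega⟩ : Fin (m + 2)) = Fin.succ 0 from rfl,
        Fin.cons_zero, Fin.cons_succ] at H'
      exact H'
  · rintro ⟨H, h1, h2⟩ i h
    match i, h with
    | 0, h =>
      rw [show (⟨0, Nat.lt_of_succ_lt h⟩ : Fin (m + 2)) = 0 from rfl,
        show (⟨0 + 1, h⟩ : Fin (m + 2)) = Fin.succ 0 from rfl,
        Fin.cons_zero, Fin.cons_succ]
      exact ⟨h1, h2⟩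
    | i + 1, h =>
      have H' := H i (by omega)
      rw [show (⟨i + 1, Nat.lt_of_succ_lt h⟩ : Fin (m + 2)) = Fin.succ ⟨i, by omega⟩ from rfl,
        show (⟨i + 1 + 1, h⟩ : Fin (m + 2)) = Fin.succ ⟨i + 1, by omega⟩ from rfl,
        Fin.cons_succ, Fin.cons_succ]
      exact H'

noncomputable def cntA (S : Finset (Fin k)) (m : ℕ) : ℕ :=
  Nat.card {c : Fin (m + 1) → Fin k // pathOK S c ∧ c 0 ∈ S}

noncomputable def cntB (S : Finset (Fin k)) (m : ℕ) : ℕ :=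
  Nat.card {c : Fin (m + 1) → Fin k // pathOK S c ∧ c 0 ∉ S}

/-- the structural equivalence peeling off the head vertex. -/
def peelEquiv (S : Finset (Fin k)) {m : ℕ} (p : Fin k → Prop) :
    {c : Fin (m + 2) → Fin k // pathOK S c ∧ p (c 0)} ≃
      Σ c' : {c' : Fin (m + 1) → Fin k // pathOK S c'},
        {x : Fin k // (x ≠ c'.1 0 ∧ ¬(x ∈ S ∧ c'.1 0 ∈ S)) ∧ p x} where
  toFun c := by
    refine ⟨⟨Fin.tail c.1, ?_⟩, ⟨c.1 0, ?_, ?_⟩⟩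
    · have := c.2.1
      rw [← Fin.cons_self_tail c.1, pathOK_cons] at this
      exact this.1
    · have := c.2.1
      rw [← Fin.cons_self_tail c.1, pathOK_cons] at this
      exact this.2
    · exact c.2.2
  invFun p' := ⟨Fin.cons p'.2.1 p'.1.1, by
    rw [pathOK_cons]
    exact ⟨p'.1.2, p'.2.2.1⟩, by simpa using p'.2.2.2⟩
  left_inv c := by
    ext y
    simp [Fin.cons_self_tail]
  right_inv p' := by
    refine Sigma.ext ?_ ?_
    · simp [Fin.tail_cons]
    · simp [Fin.tail_cons, Fin.cons_zero]
      exact HEq.rfl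

lemma natcard_mem (p : Fin k → Prop) (T : Finset (Fin k)) (h : ∀ x, p x ↔ x ∈ T) :
    Nat.card {x : Fin k // p x} = T.card := by
  rw [Nat.card_congr (Equiv.subtypeEquivRight h), Nat.card_eq_finsetCard]

lemma card_mem_ne (S : Finset (Fin k)) (y : Fin k) (hy : y ∉ S) :
    Nat.card {x : Fin k // (x ≠ y ∧ ¬(x ∈ S ∧ y ∈ S)) ∧ x ∈ S} = S.card := by
  refine natcard_mem _ S fun x => ?_
  constructor
  · rintro ⟨_, hx⟩; exact hx
  · intro hx
    exact ⟨⟨fun h => hy (h ▸ hx), fun h => hy h.2⟩, hx⟩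

lemma card_notmem_ne_of_mem (S : Finset (Fin k)) (y : Fin k) (hy : y ∈ S) :
    Nat.card {x : Fin k // (x ≠ y ∧ ¬(x ∈ S ∧ y ∈ S)) ∧ x ∉ S} = k - S.card := by
  rw [natcard_mem _ Sᶜ (fun x => by
    simp only [Finset.mem_compl]
    constructor
    · rintro ⟨_, hx⟩; exact hx
    · intro hx
      exact ⟨⟨fun h => hx (h ▸ hy), fun h => hx h.1⟩, hx⟩)]
  rw [Finset.card_compl, Fintype.card_fin]

lemma card_notmem_ne_of_notmem (S : Finset (Fin k)) (y : Fin k) (hy : y ∉ S) :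
    Nat.card {x : Fin k // (x ≠ y ∧ ¬(x ∈ S ∧ y ∈ S)) ∧ x ∉ S} = k - S.card - 1 := by
  rw [natcard_mem _ (Sᶜ.erase y) (fun x => by
    simp only [Finset.mem_erase, Finset.mem_compl]
    tauto)]
  rw [Finset.card_erase_of_mem (by simpa using hy), Finset.card_compl, Fintype.card_fin]

lemma cntA_zero (S : Finset (Fin k)) : cntA S 0 = S.card := by
  unfold cntA
  have e : {c : Fin 1 → Fin k // pathOK S c ∧ c 0 ∈ S} ≃ {x : Fin k // x ∈ S} :=
    { toFun := fun c => ⟨c.1 0, c.2.2⟩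
      invFun := fun x => ⟨fun _ => x.1, by intro i h; omega, x.2⟩
      left_inv := fun c => by
        ext j
        have : j = 0 := Subsingleton.elim _ _
        rw [this]
      right_inv := fun x => rfl }
  rw [Nat.card_congr e, Nat.card_eq_finsetCard]

lemma cntB_zero (S : Finset (Fin k)) : cntB S 0 = k - S.card := by
  unfold cntB
  have e : {c : Fin 1 → Fin k // pathOK S c ∧ c 0 ∉ S} ≃ {x : Fin k // x ∉ S} :=
    { toFun := fun c => ⟨c.1 0, c.2.2⟩
      invFun := fun x => ⟨fun _ => x.1, by intro i h; omega, x.2⟩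
      left_inv := fun c => by
        ext j
        have : j = 0 := Subsingleton.elim _ _
        rw [this]
      right_inv := fun x => rfl }
  rw [Nat.card_congr e, natcard_mem _ Sᶜ (fun x => by simp), Finset.card_compl, Fintype.card_fin]

lemma filterP_card (S : Finset (Fin k)) (m : ℕ) :
    (Finset.univ.filter (fun c' : {c' : Fin (m + 1) → Fin k // pathOK S c'} => c'.1 0 ∈ S)).card
      = cntA S m := by
  rw [← Fintype.card_subtype]
  unfold cntA
  rw [Nat.card_eq_fintype_card]
  exact Fintype.card_congr (Equiv.subtypeSubtypeEquivSubtypeInter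
    (fun c : Fin (m + 1) → Fin k => pathOK S c) (fun c => c 0 ∈ S))

lemma filterNP_card (S : Finset (Fin k)) (m : ℕ) :
    (Finset.univ.filter (fun c' : {c' : Fin (m + 1) → Fin k // pathOK S c'} => c'.1 0 ∉ S)).card
      = cntB S m := by
  rw [← Fintype.card_subtype]
  unfold cntB
  rw [Nat.card_eq_fintype_card]
  exact Fintype.card_congr (Equiv.subtypeSubtypeEquivSubtypeInter
    (fun c : Fin (m + 1) → Fin k => pathOK S c) (fun c => c 0 ∉ S))

lemma cntA_succ (S : Finset (Fin k)) (m : ℕ) :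
    cntA S (m + 1) = S.card * cntB S m := by
  unfold cntA
  rw [Nat.card_congr (peelEquiv S (fun x => x ∈ S)), Nat.card_eq_fintype_card,
    Fintype.card_sigma]
  have key : ∀ c' : {c' : Fin (m + 1) → Fin k // pathOK S c'},
      Fintype.card {x : Fin k // (x ≠ c'.1 0 ∧ ¬(x ∈ S ∧ c'.1 0 ∈ S)) ∧ x ∈ S} =
      if c'.1 0 ∈ S then 0 else S.card := by
    intro c'
    by_cases h : c'.1 0 ∈ S
    · rw [if_pos h, Fintype.card_eq_zero_iff]
      exact ⟨fun x => (x.2.1.2 ⟨x.2.2, h⟩).elim⟩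
    · rw [if_neg h, ← Nat.card_eq_fintype_card]
      exact card_mem_ne S _ h
  rw [Finset.sum_congr rfl (fun c' _ => key c'), Finset.sum_ite, Finset.sum_const,
    Finset.sum_const, smul_zero, zero_add, smul_eq_mul, filterNP_card, mul_comm]

lemma cntB_succ (S : Finset (Fin k)) (m : ℕ) :
    cntB S (m + 1) = (k - S.card) * cntA S m + (k - S.card - 1) * cntB S m := by
  unfold cntB
  rw [Nat.card_congr (peelEquiv S (fun x => x ∉ S)), Nat.card_eq_fintype_card,
    Fintype.card_sigma]
  have key : ∀ c' : {c' : Fin (m + 1) → Fin k // pathOK S c'},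
      Fintype.card {x : Fin k // (x ≠ c'.1 0 ∧ ¬(x ∈ S ∧ c'.1 0 ∈ S)) ∧ x ∉ S} =
      if c'.1 0 ∈ S then k - S.card else k - S.card - 1 := by
    intro c'
    by_cases h : c'.1 0 ∈ S
    · rw [if_pos h, ← Nat.card_eq_fintype_card]
      exact card_notmem_ne_of_mem S _ h
    · rw [if_neg h, ← Nat.card_eq_fintype_card]
      exact card_notmem_ne_of_notmem S _ h
  rw [Finset.sum_congr rfl (fun c' _ => key c'), Finset.sum_ite, Finset.sum_const,
    Finset.sum_const, smul_eq_mul, smul_eq_mul, filterP_card, filterNP_card]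
  unfold cntB
  ring

noncomputable def pAB (b : ℕ) : ℕ → ℚ[X] × ℚ[X]
  | 0 => (C (b : ℚ), X - C (b : ℚ))
  | m + 1 => (C (b : ℚ) * (pAB b m).2,
      (X - C (b : ℚ)) * (pAB b m).1 + (X - C (b : ℚ) - 1) * (pAB b m).2)

noncomputable def PW (b : ℕ) : ℕ → ℚ[X]
  | 0 => 1
  | 1 => X
  | 2 => (X - C (b : ℚ)) * (X + C (b : ℚ) - 1)
  | m + 3 => (X - C (b : ℚ) - 1) * PW b (m + 2) + C (b : ℚ) * (X - C (b : ℚ)) * PW b (m + 1)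

lemma pAB_add_eq_PW (b : ℕ) : ∀ m : ℕ, (pAB b m).1 + (pAB b m).2 = PW b (m + 1) := by
  intro m
  induction m using Nat.strong_induction_on with
  | _ m ih =>
    match m with
    | 0 => simp [pAB, PW]
    | 1 =>
      show C (b:ℚ) * (X - C (b:ℚ)) + ((X - C (b:ℚ)) * C (b:ℚ) + (X - C (b:ℚ) - 1) * (X - C (b:ℚ)))
        = (X - C (b:ℚ)) * (X + C (b:ℚ) - 1)
      ring
    | m + 2 =>
      have ih1 := ih (m + 1) (by omega)
      have ih0 := ih m (by omega)
      show C (b:ℚ) * (pAB b (m+1)).2 + ((X - C (b:ℚ)) * (pAB b (m+1)).1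
          + (X - C (b:ℚ) - 1) * (pAB b (m+1)).2)
        = (X - C (b:ℚ) - 1) * PW b (m + 2) + C (b:ℚ) * (X - C (b:ℚ)) * PW b (m + 1)
      rw [← ih1, ← ih0]
      show C (b:ℚ) * ((X - C (b:ℚ)) * (pAB b m).1 + (X - C (b:ℚ) - 1) * (pAB b m).2)
          + ((X - C (b:ℚ)) * (C (b:ℚ) * (pAB b m).2)
          + (X - C (b:ℚ) - 1) * ((X - C (b:ℚ)) * (pAB b m).1 + (X - C (b:ℚ) - 1) * (pAB b m).2))
        = (X - C (b:ℚ) - 1) * (C (b:ℚ) * (pAB b m).2 + ((X - C (b:ℚ)) * (pAB b m).1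
            + (X - C (b:ℚ) - 1) * (pAB b m).2))
          + C (b:ℚ) * (X - C (b:ℚ)) * ((pAB b m).1 + (pAB b m).2)
      ring

lemma cnt_cast_eval (b : ℕ) (S : Finset (Fin k)) (hS : S.card = b) :
    ∀ m : ℕ, ((cntA S m : ℚ) = ((pAB b m).1).eval (k : ℚ) ∧
      (cntB S m : ℚ) = ((pAB b m).2).eval (k : ℚ)) := by
  have hbk : b ≤ k := by
    rw [← hS]
    simpa using Finset.card_le_univ S
  intro m
  induction m with
  | zero =>
    constructor
    · rw [cntA_zero, hS]; simp [pAB]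
    · rw [cntB_zero, hS]
      simp only [pAB, eval_sub, eval_X, eval_C]
      rw [Nat.cast_sub hbk]
  | succ m ih =>
    obtain ⟨ihA, ihB⟩ := ih
    constructor
    · rw [cntA_succ, hS]
      show ((b * cntB S m : ℕ) : ℚ) = (C (b:ℚ) * (pAB b m).2).eval (k : ℚ)
      push_cast
      rw [ihB, eval_mul, eval_C]
    · rw [cntB_succ, hS]
      show (((k - b) * cntA S m + (k - b - 1) * cntB S m : ℕ) : ℚ)
        = ((X - C (b:ℚ)) * (pAB b m).1 + (X - C (b:ℚ) - 1) * (pAB b m).2).eval (k:ℚ)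
      rcases Nat.lt_or_ge b k with hlt | hge
      · have h1 : (((k - b : ℕ)) : ℚ) = (k : ℚ) - b := by
          rw [Nat.cast_sub hbk]
        have h2 : (((k - b - 1 : ℕ)) : ℚ) = (k : ℚ) - b - 1 := by
          rw [Nat.cast_sub (by omega), Nat.cast_sub hbk]
          norm_num
        rw [Nat.cast_add, Nat.cast_mul, Nat.cast_mul, h1, h2, ihA, ihB]
        simp only [eval_add, eval_mul, eval_sub, eval_X, eval_C, eval_one]
      · have hkb : k = b := le_antisymm hge hbk
        subst hkb
        have hBzero : cntB S m = 0 := by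
          unfold cntB
          rw [Nat.card_eq_zero]
          left
          constructor
          rintro ⟨c, -, hc⟩
          apply hc
          have : S = Finset.univ := Finset.eq_univ_of_card S (by rw [hS, Fintype.card_fin])
          rw [this]
          exact Finset.mem_univ _
        have hRHS : ((X - C (k:ℚ)) * (pAB k m).1 + (X - C (k:ℚ) - 1) * (pAB k m).2).eval (k:ℚ)
            = ((k:ℚ) - k) * ((pAB k m).1).eval (k:ℚ)
              + ((k:ℚ) - k - 1) * ((pAB k m).2).eval (k:ℚ) := by
          simp only [eval_add, eval_mul, eval_sub, eval_X, eval_C, eval_one]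
        rw [hRHS, ← ihA, ← ihB, hBzero]
        simp

def RedPath (m b : ℕ) : SimpleGraph (Fin (m + 1) ⊕ Fin b) where
  Adj a c := match a, c with
    | Sum.inl i, Sum.inl j => (i : ℕ) + 1 = (j : ℕ) ∨ (j : ℕ) + 1 = (i : ℕ)
    | _, _ => False
  symm := by constructor; rintro (i | i) (j | j) h <;> simp_all <;> tauto
  loopless := by constructor; rintro (i | i) h <;> simp_all

def BlueClique (m b : ℕ) : SimpleGraph (Fin (m + 1) ⊕ Fin b) where
  Adj a c := match a, c with
    | Sum.inr i, Sum.inr j => i ≠ j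
    | _, _ => False
  symm := by constructor; rintro (i | i) (j | j) h <;> simp_all <;> exact fun h' => h h'.symm
  loopless := by constructor; rintro (i | i) h <;> simp_all

lemma redpath_adj {m b : ℕ} (i j : Fin (m + 1)) :
    (RedPath m b).Adj (Sum.inl i) (Sum.inl j) ↔ ((i : ℕ) + 1 = (j : ℕ) ∨ (j : ℕ) + 1 = (i : ℕ)) :=
  Iff.rfl

lemma blueclique_adj {m b : ℕ} (i j : Fin b) :
    (BlueClique m b).Adj (Sum.inr i) (Sum.inr j) ↔ i ≠ j := Iff.rfl

lemma sup_adj_iff {m b : ℕ} (u v : Fin (m + 1) ⊕ Fin b) :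
    (RedPath m b ⊔ BlueClique m b ⊔ (⊥ : SimpleGraph (Fin (m + 1) ⊕ Fin b))).Adj u v ↔
      (RedPath m b).Adj u v ∨ (BlueClique m b).Adj u v := by
  simp only [SimpleGraph.sup_adj, SimpleGraph.bot_adj, or_false]

lemma mixed_iff (m b : ℕ) (c : Fin (m + 1) ⊕ Fin b → Fin k) :
    IsMixedColouring (RedPath m b) (BlueClique m b) ⊥ c ↔
      (Function.Injective fun j : Fin b => c (Sum.inr j)) ∧
      pathOK (Finset.image (fun j : Fin b => c (Sum.inr j)) Finset.univ)
        (fun i : Fin (m + 1) => c (Sum.inl i)) := by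
  constructor
  · rintro ⟨hprop, hpair⟩
    constructor
    · intro j j' hjj
      by_contra hne
      exact hprop _ _ ((sup_adj_iff _ _).2 (Or.inr ((blueclique_adj j j').2 hne))) hjj
    · intro i h
      have hadjR : (RedPath m b).Adj (Sum.inl ⟨i, Nat.lt_of_succ_lt h⟩) (Sum.inl ⟨i + 1, h⟩) :=
        Or.inl rfl
      refine ⟨hprop _ _ ((sup_adj_iff _ _).2 (Or.inl hadjR)), ?_⟩
      rintro ⟨h1, h2⟩
      simp only [Finset.mem_image, Finset.mem_univ, true_and] at h1 h2
      obtain ⟨v, hv⟩ := h1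
      obtain ⟨y, hy⟩ := h2
      by_cases hvy : v = y
      · subst hvy
        exact hprop _ _ ((sup_adj_iff _ _).2 (Or.inl hadjR)) (by rw [← hv, hy])
      · exact hpair _ _ _ _ hadjR ((blueclique_adj v y).2 hvy) hv.symm (by rw [hy])
  · rintro ⟨hinj, hpath⟩
    constructor
    · rintro (u | u) (v | v) hadj heq <;> rw [sup_adj_iff] at hadj
      · rcases hadj with hadj | hadj
        · rcases hadj with h1 | h1
          · have := (hpath (u : ℕ) (by omega)).1
            rw [show (⟨(u : ℕ), by omega⟩ : Fin (m + 1)) = u from Fin.ext rfl,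
              show (⟨(u : ℕ) + 1, by omega⟩ : Fin (m + 1)) = v from Fin.ext h1] at this
            exact this heq
          · have := (hpath (v : ℕ) (by omega)).1
            rw [show (⟨(v : ℕ), by omega⟩ : Fin (m + 1)) = v from Fin.ext rfl,
              show (⟨(v : ℕ) + 1, by omega⟩ : Fin (m + 1)) = u from Fin.ext h1] at this
            exact this heq.symm
        · exact hadj
      · exact (by rcases hadj with h | h <;> exact h : False)
      · exact (by rcases hadj with h | h <;> exact h : False)
      · rcases hadj with hadj | hadj
        · exact hadj
        · exact hadj (hinj heq)
    · rintro (p | p) (p' | p') (v | v) (y | y) hR hB hcu heq <;>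
        first
          | exact hR
          | exact hB
          | skip
      have hS1 : c (Sum.inl p) ∈ Finset.image (fun j : Fin b => c (Sum.inr j)) Finset.univ := by
        simp only [Finset.mem_image, Finset.mem_univ, true_and]
        exact ⟨v, hcu.symm⟩
      have hS2 : c (Sum.inl p') ∈ Finset.image (fun j : Fin b => c (Sum.inr j)) Finset.univ := by
        simp only [Finset.mem_image, Finset.mem_univ, true_and]
        exact ⟨y, heq.symm⟩
      rcases hR with h1 | h1
      · have := (hpath (p : ℕ) (by omega)).2
        rw [show (⟨(p : ℕ), by omega⟩ : Fin (m + 1)) = p from Fin.ext rfl,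
          show (⟨(p : ℕ) + 1, by omega⟩ : Fin (m + 1)) = p' from Fin.ext h1] at this
        exact this ⟨hS1, hS2⟩
      · have := (hpath (p' : ℕ) (by omega)).2
        rw [show (⟨(p' : ℕ), by omega⟩ : Fin (m + 1)) = p' from Fin.ext rfl,
          show (⟨(p' : ℕ) + 1, by omega⟩ : Fin (m + 1)) = p from Fin.ext h1] at this
        exact this ⟨hS2, hS1⟩

def splitEquiv (m b : ℕ) :
    {c : Fin (m + 1) ⊕ Fin b → Fin k //
        IsMixedColouring (RedPath m b) (BlueClique m b) ⊥ c} ≃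
      Σ g : {g : Fin b → Fin k // Function.Injective g},
        {f : Fin (m + 1) → Fin k // pathOK (Finset.image g.1 Finset.univ) f} where
  toFun c := ⟨⟨fun j => c.1 (Sum.inr j), ((mixed_iff m b c.1).1 c.2).1⟩,
    ⟨fun i => c.1 (Sum.inl i), ((mixed_iff m b c.1).1 c.2).2⟩⟩
  invFun p := ⟨Sum.elim p.2.1 p.1.1, (mixed_iff m b _).2 ⟨p.1.2, p.2.2⟩⟩
  left_inv c := by
    apply Subtype.ext
    funext x
    cases x <;> rfl
  right_inv p := rfl

lemma card_pathOK (b m : ℕ) (g : Fin b → Fin k) (hg : Function.Injective g) :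
    ((Nat.card {f : Fin (m + 1) → Fin k // pathOK (Finset.image g Finset.univ) f} : ℚ))
      = (PW b (m + 1)).eval (k : ℚ) := by
  set S : Finset (Fin k) := Finset.image g Finset.univ with hSdef
  have hS : S.card = b := by
    rw [hSdef, Finset.card_image_of_injective _ hg, Finset.card_univ, Fintype.card_fin]
  have hsplit : Nat.card {f : Fin (m + 1) → Fin k // pathOK S f} = cntA S m + cntB S m := by
    unfold cntA cntB
    rw [Nat.card_eq_fintype_card, Nat.card_eq_fintype_card, Nat.card_eq_fintype_card]
    rw [← Fintype.card_congr (Equiv.subtypeSubtypeEquivSubtypeInter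
        (fun f : Fin (m + 1) → Fin k => pathOK S f) (fun f => f 0 ∈ S)),
      ← Fintype.card_congr (Equiv.subtypeSubtypeEquivSubtypeInter
        (fun f : Fin (m + 1) → Fin k => pathOK S f) (fun f => f 0 ∉ S)),
      ← Fintype.card_sum]
    exact Fintype.card_congr (Equiv.sumCompl fun x : {f // pathOK S f} => x.1 0 ∈ S).symm
  rw [hsplit]
  push_cast
  rw [(cnt_cast_eval b S hS m).1, (cnt_cast_eval b S hS m).2, ← eval_add, pAB_add_eq_PW]

lemma numColourings_eq (m b : ℕ) (k : ℕ) :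
    ((numColourings (RedPath m b) (BlueClique m b) ⊥ k : ℕ) : ℚ)
      = ((k.descFactorial b : ℕ) : ℚ) * (PW b (m + 1)).eval (k : ℚ) := by
  unfold numColourings
  rw [Nat.card_congr (splitEquiv m b), Nat.card_eq_fintype_card, Fintype.card_sigma]
  push_cast
  have h1 : ∀ g : {g : Fin b → Fin k // Function.Injective g},
      ((Nat.card {f : Fin (m + 1) → Fin k // pathOK (Finset.image g.1 Finset.univ) f} : ℕ) : ℚ)
        = (PW b (m + 1)).eval (k : ℚ) := fun g => card_pathOK b m g.1 g.2
  simp only [← Nat.card_eq_fintype_card]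
  rw [Finset.sum_congr rfl fun g _ => h1 g]
  rw [Finset.sum_const, Finset.card_univ, nsmul_eq_mul]
  congr 1
  rw [Fintype.card_congr (Equiv.subtypeInjectiveEquivEmbedding (Fin b) (Fin k)),
    Fintype.card_embedding_eq, Fintype.card_fin, Fintype.card_fin]

lemma mixed_comap {V W : Type*} (e : V ≃ W) (R B : SimpleGraph W) {kk : ℕ} (c : W → Fin kk) :
    IsMixedColouring (R.comap e) (B.comap e) ⊥ (c ∘ e) ↔ IsMixedColouring R B ⊥ c := by
  unfold IsMixedColouring
  have hadj : ∀ u v : V,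
      (R.comap e ⊔ B.comap e ⊔ (⊥ : SimpleGraph V)).Adj u v ↔
        (R ⊔ B ⊔ (⊥ : SimpleGraph W)).Adj (e u) (e v) := by
    intro u v
    simp [SimpleGraph.sup_adj, SimpleGraph.comap_adj, SimpleGraph.bot_adj]
  constructor
  · rintro ⟨h1, h2⟩
    refine ⟨fun u v h => ?_, fun u x v y hR hB hc => ?_⟩
    · have := h1 (e.symm u) (e.symm v) (by rw [hadj]; simpa using h)
      simpa using this
    · have := h2 (e.symm u) (e.symm x) (e.symm v) (e.symm y)
        (by simpa [SimpleGraph.comap_adj] using hR)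
        (by simpa [SimpleGraph.comap_adj] using hB)
        (by simpa using hc)
      simpa using this
  · rintro ⟨h1, h2⟩
    refine ⟨fun u v h => h1 (e u) (e v) ((hadj u v).1 h), fun u x v y hR hB hc => ?_⟩
    exact h2 (e u) (e x) (e v) (e y) hR hB hc

lemma numColourings_comap {V W : Type*} (e : V ≃ W) (R B : SimpleGraph W) (kk : ℕ) :
    numColourings (R.comap e) (B.comap e) ⊥ kk = numColourings R B ⊥ kk := by
  unfold numColourings
  apply Nat.card_congr
  refine Equiv.subtypeEquiv (Equiv.arrowCongr e.symm (Equiv.refl _)).symm fun c => ?_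
  show IsMixedColouring (R.comap e) (B.comap e) ⊥ c ↔ _
  have : c = (c ∘ e.symm) ∘ e := by
    funext x; simp
  rw [this, mixed_comap e R B (c ∘ e.symm)]
  have h2 : (e.symm.arrowCongr (Equiv.refl (Fin kk))).symm ((c ∘ ⇑e.symm) ∘ ⇑e) = c ∘ ⇑e.symm := by
    funext x
    simp [Equiv.arrowCongr]
  rw [h2]

def RedPathF (m b : ℕ) : SimpleGraph (Fin (m + 1 + b)) :=
  (RedPath m b).comap finSumFinEquiv.symm

def BlueCliqueF (m b : ℕ) : SimpleGraph (Fin (m + 1 + b)) :=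
  (BlueClique m b).comap finSumFinEquiv.symm

lemma cast_descFactorial (kk b : ℕ) :
    ((kk.descFactorial b : ℕ) : ℚ) = ∏ i ∈ Finset.range b, ((kk : ℚ) - i) := by
  rcases le_or_gt b kk with h | h
  · rw [Nat.descFactorial_eq_prod_range, Nat.cast_prod]
    refine Finset.prod_congr rfl fun i hi => ?_
    rw [Nat.cast_sub (le_of_lt (lt_of_lt_of_le (Finset.mem_range.1 hi) h))]
  · rw [Nat.descFactorial_eq_zero_iff_lt.2 h, Nat.cast_zero]
    symm
    apply Finset.prod_eq_zero (Finset.mem_range.2 h)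
    simp

noncomputable def Pfinal (b m : ℕ) : ℚ[X] :=
  (∏ i ∈ Finset.range b, (X - C (i : ℚ))) * PW b (m + 1)

lemma Pfinal_eval (b m kk : ℕ) :
    (Pfinal b m).eval (kk : ℚ) = numColourings (RedPathF m b) (BlueCliqueF m b) ⊥ kk := by
  unfold RedPathF BlueCliqueF
  rw [numColourings_comap, numColourings_eq]
  unfold Pfinal
  rw [eval_mul, eval_prod, cast_descFactorial]
  congr 1
  refine Finset.prod_congr rfl fun i _ => ?_
  simp

lemma disjoint_RB (m b : ℕ) : Disjoint (RedPathF m b) (BlueCliqueF m b) := by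
  rw [disjoint_iff]
  ext u v
  simp only [SimpleGraph.inf_adj, SimpleGraph.bot_adj, iff_false]
  unfold RedPathF BlueCliqueF
  simp only [SimpleGraph.comap_adj]
  rcases finSumFinEquiv.symm u with i | i <;> rcases h : finSumFinEquiv.symm v with j | j <;>
    rintro ⟨h1, h2⟩ <;> (try exact h1) <;> (try exact h2)

lemma redF_ne_bot (m b : ℕ) (hm : 1 ≤ m) : RedPathF m b ≠ ⊥ := by
  intro hbot
  have h2 : (1 : ℕ) < m + 1 := by omega
  have hadj : (RedPathF m b).Adj (finSumFinEquiv (Sum.inl ⟨0, by omega⟩))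
      (finSumFinEquiv (Sum.inl ⟨1, h2⟩)) := by
    unfold RedPathF
    simp only [SimpleGraph.comap_adj, Equiv.symm_apply_apply]
    exact Or.inl rfl
  rw [hbot] at hadj
  exact hadj

lemma blueF_ne_bot (m b : ℕ) (hb : 2 ≤ b) : BlueCliqueF m b ≠ ⊥ := by
  intro hbot
  have h2 : (1 : ℕ) < b := by omega
  have hadj : (BlueCliqueF m b).Adj (finSumFinEquiv (Sum.inr ⟨0, by omega⟩))
      (finSumFinEquiv (Sum.inr ⟨1, h2⟩)) := by
    unfold BlueCliqueF
    simp only [SimpleGraph.comap_adj, Equiv.symm_apply_apply]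
    intro hcontra
    have := congrArg Fin.val hcontra
    simp at this
  rw [hbot] at hadj
  exact hadj

noncomputable section Analysis

open Complex Real

variable (b : ℕ)

def pp (x : ℝ) : ℝ := x - b - 1
def qq (x : ℝ) : ℝ := b * (x - b)
def dsc (x : ℝ) : ℝ := pp b x ^ 2 + 4 * qq b x
def vv (x : ℝ) : ℝ := Real.sqrt (-(dsc b x)) / 2
def lam (x : ℝ) : ℂ := (↑(pp b x / 2) : ℂ) + (↑(vv b x) : ℂ) * Complex.I
def w2v (x : ℝ) : ℝ := x ^ 2 - x - b ^ 2 + b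
def Acoef (x : ℝ) : ℂ := (↑(x / 2) : ℂ) +
  (↑(-((w2v b x - x * (pp b x / 2)) / (2 * vv b x))) : ℂ) * Complex.I

def wre (x : ℝ) (n : ℕ) : ℝ := Polynomial.aeval x (PW b n)

lemma wre_one (x : ℝ) : wre b x 1 = x := by
  unfold wre PW
  simp

lemma wre_two (x : ℝ) : wre b x 2 = w2v b x := by
  unfold wre PW w2v
  simp only [map_mul, map_add, map_sub, map_one, Polynomial.aeval_X, Polynomial.aeval_C]
  push_cast
  ring

lemma wre_rec (x : ℝ) (n : ℕ) :
    wre b x (n + 3) = pp b x * wre b x (n + 2) + qq b x * wre b x (n + 1) := by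
  unfold wre pp qq
  show Polynomial.aeval x ((Polynomial.X - Polynomial.C (b:ℚ) - 1) * PW b (n + 2)
    + Polynomial.C (b:ℚ) * (Polynomial.X - Polynomial.C (b:ℚ)) * PW b (n + 1)) = _
  simp only [map_mul, map_add, map_sub, map_one, Polynomial.aeval_X, Polynomial.aeval_C]
  push_cast
  ring

lemma lam_re (x : ℝ) : (lam b x).re = pp b x / 2 := by simp [lam]
lemma lam_im (x : ℝ) : (lam b x).im = vv b x := by simp [lam]

lemma Acoef_re (x : ℝ) : (Acoef b x).re = x / 2 := by
  rw [Acoef]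
  simp only [Complex.add_re, Complex.ofReal_re, Complex.mul_re, Complex.I_re, Complex.I_im,
    Complex.ofReal_im]
  ring
lemma Acoef_im (x : ℝ) : (Acoef b x).im = -((w2v b x - x * (pp b x / 2)) / (2 * vv b x)) := by
  rw [Acoef]
  simp only [Complex.add_im, Complex.ofReal_im, Complex.mul_im, Complex.I_re, Complex.I_im,
    Complex.ofReal_re]
  ring

lemma vv_pos {x : ℝ} (h : dsc b x < 0) : 0 < vv b x := by
  unfold vv
  exact div_pos (Real.sqrt_pos.2 (by linarith)) two_pos

lemma vv_sq {x : ℝ} (h : dsc b x < 0) : vv b x ^ 2 = -(dsc b x) / 4 := by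
  unfold vv
  rw [div_pow, Real.sq_sqrt (by linarith)]
  norm_num

lemma lam_sq {x : ℝ} (h : dsc b x < 0) :
    lam b x ^ 2 = (↑(pp b x) : ℂ) * lam b x + (↑(qq b x) : ℂ) := by
  have hv := vv_sq b h
  have hd : dsc b x = pp b x ^ 2 + 4 * qq b x := rfl
  apply Complex.ext
  · simp only [pow_two, Complex.mul_re, Complex.add_re, Complex.mul_im, lam_re, lam_im,
      Complex.ofReal_re, Complex.ofReal_im]
    nlinarith [hv]
  · simp only [pow_two, Complex.mul_re, Complex.add_im, Complex.mul_im, lam_re, lam_im,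
      Complex.ofReal_re, Complex.ofReal_im]
    ring

lemma z_rep {x : ℝ} (h : dsc b x < 0) :
    ∀ n : ℕ, ((wre b x (n + 1) : ℝ) : ℂ)
      = Acoef b x * lam b x ^ n + (starRingEnd ℂ) (Acoef b x) * (starRingEnd ℂ) (lam b x) ^ n := by
  have hv := vv_pos b h
  intro n
  induction n using Nat.strong_induction_on with
  | _ n ih =>
    match n with
    | 0 =>
      simp only [pow_zero, mul_one]
      rw [wre_one, Complex.add_conj, Acoef_re]
      push_cast
      ring
    | 1 =>
      have hvne : vv b x ≠ 0 := ne_of_gt (vv_pos b h)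
      simp only [pow_one]
      rw [← map_mul, Complex.add_conj, wre_two]
      have hre : (Acoef b x * lam b x).re = w2v b x / 2 := by
        rw [Complex.mul_re, Acoef_re, Acoef_im, lam_re, lam_im]
        field_simp
        ring
      rw [hre]
      push_cast
      ring
    | n + 2 =>
      have ih1 := ih (n + 1) (by omega)
      have ih0 := ih n (by omega)
      rw [wre_rec]
      push_cast
      rw [ih1, ih0]
      have hconj : (starRingEnd ℂ) (lam b x) ^ 2
          = (↑(pp b x) : ℂ) * (starRingEnd ℂ) (lam b x) + (↑(qq b x) : ℂ) := by
        have := congrArg (starRingEnd ℂ) (lam_sq b h)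
        simpa [map_add, map_mul, map_pow, Complex.conj_ofReal] using this
      calc (↑(pp b x) : ℂ) * (Acoef b x * lam b x ^ (n+1)
            + (starRingEnd ℂ) (Acoef b x) * (starRingEnd ℂ) (lam b x) ^ (n+1))
          + (↑(qq b x) : ℂ) * (Acoef b x * lam b x ^ n
            + (starRingEnd ℂ) (Acoef b x) * (starRingEnd ℂ) (lam b x) ^ n)
          = Acoef b x * lam b x ^ n * ((↑(pp b x) : ℂ) * lam b x + (↑(qq b x) : ℂ))
            + (starRingEnd ℂ) (Acoef b x) * (starRingEnd ℂ) (lam b x) ^ n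
              * ((↑(pp b x) : ℂ) * (starRingEnd ℂ) (lam b x) + (↑(qq b x) : ℂ)) := by ring
        _ = Acoef b x * lam b x ^ (n + 2)
            + (starRingEnd ℂ) (Acoef b x) * (starRingEnd ℂ) (lam b x) ^ (n + 2) := by
            rw [← lam_sq b h, ← hconj]; ring

lemma re_mul_pow (A lm : ℂ) (n : ℕ) :
    (A * lm ^ n).re = ‖A‖ * ‖lm‖ ^ n * Real.cos (A.arg + n * lm.arg) := by
  conv_lhs => rw [← Complex.norm_mul_exp_arg_mul_I A, ← Complex.norm_mul_exp_arg_mul_I lm]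
  rw [mul_pow, ← Complex.exp_nat_mul]
  have hexp : Complex.exp (↑A.arg * Complex.I) * Complex.exp (↑n * (↑lm.arg * Complex.I))
      = Complex.exp (↑(A.arg + n * lm.arg) * Complex.I) := by
    rw [← Complex.exp_add]
    congr 1
    push_cast
    ring
  calc ((↑(‖A‖) : ℂ) * Complex.exp (↑A.arg * Complex.I) *
        ((↑(‖lm‖) : ℂ) ^ n * Complex.exp (↑n * (↑lm.arg * Complex.I)))).re
      = ((↑(‖A‖ * ‖lm‖ ^ n) : ℂ) *
          Complex.exp (↑(A.arg + n * lm.arg) * Complex.I)).re := by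
        rw [← hexp]
        push_cast
        ring_nf
    _ = ‖A‖ * ‖lm‖ ^ n * Real.cos (A.arg + n * lm.arg) := by
        rw [Complex.re_ofReal_mul, Complex.exp_ofReal_mul_I_re]

lemma wre_eq_re {x : ℝ} (h : dsc b x < 0) (n : ℕ) :
    wre b x (n + 1) = 2 * (Acoef b x * lam b x ^ n).re := by
  have hz := z_rep b h n
  rw [← map_pow, ← map_mul, Complex.add_conj] at hz
  exact_mod_cast hz

lemma wre_sigma_cos {x : ℝ} (h : dsc b x < 0) (σ : ℝ) (hσ : σ = 1 ∨ σ = -1) (n : ℕ) :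
    wre b x (n + 1) = 2 * σ * (‖((σ:ℂ) * Acoef b x)‖ * ‖(lam b x)‖ ^ n *
      Real.cos (Complex.arg ((σ:ℂ) * Acoef b x) + n * Complex.arg (lam b x))) := by
  have hσ2 : (σ:ℂ) * (σ:ℂ) = 1 := by
    rcases hσ with h' | h' <;> (rw [h']; push_cast; ring)
  rw [wre_eq_re b h n, ← re_mul_pow]
  have : Acoef b x * lam b x ^ n = (σ:ℂ) * ((σ:ℂ) * Acoef b x * lam b x ^ n) := by
    rw [show (σ:ℂ) * ((σ:ℂ) * Acoef b x * lam b x ^ n)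
        = ((σ:ℂ) * (σ:ℂ)) * (Acoef b x * lam b x ^ n) by ring, hσ2, one_mul]
  rw [this, Complex.re_ofReal_mul]
  ring

lemma abs_lam_sq {x : ℝ} (h : dsc b x < 0) :
    ‖(lam b x)‖ ^ 2 = b * (b - x) := by
  rw [Complex.sq_norm, Complex.normSq_apply, lam_re, lam_im]
  have hv := vv_sq b h
  have : pp b x / 2 * (pp b x / 2) = pp b x ^ 2 / 4 := by ring
  rw [this, ← pow_two, hv]
  unfold dsc qq
  ring

lemma lam_ne_zero {x : ℝ} (h : dsc b x < 0) : lam b x ≠ 0 := by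
  intro hz
  have := lam_im b x
  rw [hz] at this
  simp only [Complex.zero_im] at this
  exact absurd this.symm (ne_of_gt (vv_pos b h))

lemma abs_lam_pos {x : ℝ} (h : dsc b x < 0) : 0 < ‖(lam b x)‖ :=
  norm_pos_iff.mpr (lam_ne_zero b h)

lemma cos_arg_lam {x : ℝ} (h : dsc b x < 0) :
    Real.cos (Complex.arg (lam b x)) = pp b x / 2 / ‖(lam b x)‖ := by
  rw [Complex.cos_arg (lam_ne_zero b h), lam_re]

lemma arg_lam_ne {x y : ℝ} (hb : 0 < b) (hx : dsc b x < 0) (hy : dsc b y < 0)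
    (hxy : x < y) (hyb : y ≤ (b : ℝ) - 2) :
    Complex.arg (lam b x) ≠ Complex.arg (lam b y) := by
  intro heq
  have hcx := cos_arg_lam b hx
  have hcy := cos_arg_lam b hy
  rw [heq, hcy] at hcx
  have hrx := abs_lam_pos b hx
  have hry := abs_lam_pos b hy
  have hcross : pp b x * ‖(lam b y)‖ = pp b y * ‖(lam b x)‖ := by
    field_simp at hcx
    linarith [hcx]
  have hsq := congrArg (fun t => t ^ 2) hcross
  simp only [mul_pow] at hsq
  rw [abs_lam_sq b hx, abs_lam_sq b hy] at hsq
  have hppx : pp b x = x - b - 1 := rfl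
  have hppy : pp b y = y - b - 1 := rfl
  rw [hppx, hppy] at hsq
  have hb1 : (1:ℝ) ≤ b := by exact_mod_cast hb
  have hfac : 0 < (((b:ℝ) - x) - ((b:ℝ) - y)) * (((b:ℝ) - x) * ((b:ℝ) - y) - 1) := by
    apply mul_pos (by linarith)
    nlinarith [hxy, hyb]
  have hid : (x - (b:ℝ) - 1) ^ 2 * ((b:ℝ) * ((b:ℝ) - y)) - (y - (b:ℝ) - 1) ^ 2 * ((b:ℝ) * ((b:ℝ) - x))
      = (b:ℝ) * ((((b:ℝ) - x) - ((b:ℝ) - y)) * (((b:ℝ) - x) * ((b:ℝ) - y) - 1)) := by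
    ring
  have hbpos : (0:ℝ) < b := by exact_mod_cast hb
  nlinarith [mul_pos hbpos hfac]

end Analysis

noncomputable section Analysis2
open Complex Real Set

lemma dsc_continuous (b : ℕ) : Continuous (dsc b) := by
  unfold dsc pp qq
  fun_prop

lemma vv_continuous (b : ℕ) : Continuous (vv b) := by
  unfold vv
  exact (Real.continuous_sqrt.comp (dsc_continuous b).neg).div_const 2

lemma lam_continuous (b : ℕ) : Continuous (lam b) := by
  unfold lam
  apply Continuous.add
  · exact Complex.continuous_ofReal.comp (by unfold pp; fun_prop)
  · exact (Complex.continuous_ofReal.comp (vv_continuous b)).mul continuous_const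

lemma Acoef_continuousOn (b : ℕ) {s : Set ℝ} (hs : ∀ x ∈ s, dsc b x < 0) :
    ContinuousOn (Acoef b) s := by
  unfold Acoef
  apply ContinuousOn.add
  · exact (Complex.continuous_ofReal.comp (continuous_id.div_const 2)).continuousOn
  · apply ContinuousOn.mul _ continuousOn_const
    apply Complex.continuous_ofReal.comp_continuousOn
    apply ContinuousOn.neg
    apply ContinuousOn.div
    · unfold w2v pp
      fun_prop
    · exact (continuous_const.mul (vv_continuous b)).continuousOn
    · intro x hx
      have := vv_pos b (hs x hx)
      positivity

lemma theta_continuousOn (b : ℕ) {s : Set ℝ} (hs : ∀ x ∈ s, dsc b x < 0) :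
    ContinuousOn (fun x => Complex.arg (lam b x)) s := by
  intro x hx
  apply ContinuousAt.continuousWithinAt
  show ContinuousAt (Complex.arg ∘ lam b) x
  apply ContinuousAt.comp
  · apply Complex.continuousAt_arg
    rw [Complex.mem_slitPlane_iff]
    right
    rw [lam_im]
    exact ne_of_gt (vv_pos b (hs x hx))
  · exact (lam_continuous b).continuousAt

lemma phi_continuousOn (b : ℕ) {s : Set ℝ} (hs : ∀ x ∈ s, dsc b x < 0)
    (σ : ℝ) (hsign : ∀ x ∈ s, 0 < σ * x) :
    ContinuousOn (fun x => Complex.arg ((σ:ℂ) * Acoef b x)) s := by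
  intro x hx
  show ContinuousWithinAt (Complex.arg ∘ fun x => (σ:ℂ) * Acoef b x) s x
  apply ContinuousAt.comp_continuousWithinAt
  · apply Complex.continuousAt_arg
    rw [Complex.mem_slitPlane_iff]
    left
    rw [Complex.re_ofReal_mul, Acoef_re]
    have := hsign x hx
    linarith
  · exact (continuousOn_const.mul (Acoef_continuousOn b hs)) x hx

lemma exists_PW_root (b : ℕ) (hb : 3 ≤ b) (k1 k2 : ℝ) (hk : k1 < k2)
    (hbound : ∀ x ∈ Set.Icc k1 k2, |x| ≤ (b:ℝ) - 2)
    (σ : ℝ) (hσ : σ = 1 ∨ σ = -1) (hsign : ∀ x ∈ Set.Icc k1 k2, 0 < σ * x) :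
    ∃ (N : ℕ) (a : ℝ), 1 ≤ N ∧ a ∈ Set.Icc k1 k2 ∧
      Polynomial.aeval a (PW b (N + 1)) = (0 : ℝ) := by
  have hb3 : (3:ℝ) ≤ b := by exact_mod_cast hb
  have hdisc : ∀ x ∈ Set.Icc k1 k2, dsc b x < 0 := by
    intro x hx
    have habs := hbound x hx
    rw [abs_le] at habs
    obtain ⟨h1, h2⟩ := habs
    unfold dsc pp qq
    nlinarith [mul_nonneg (by linarith : (0:ℝ) ≤ (b:ℝ) - 2 - x)
        (by linarith : (0:ℝ) ≤ x + ((b:ℝ) - 2)),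
      mul_nonneg (by linarith : (0:ℝ) ≤ 2*(b:ℝ) - 2)
        (by linarith : (0:ℝ) ≤ (b:ℝ) - 2 - x)]
  have hk1m : k1 ∈ Set.Icc k1 k2 := ⟨le_refl _, hk.le⟩
  have hk2m : k2 ∈ Set.Icc k1 k2 := ⟨hk.le, le_refl _⟩
  have hθne : Complex.arg (lam b k1) ≠ Complex.arg (lam b k2) := by
    apply arg_lam_ne b (by omega) (hdisc k1 hk1m) (hdisc k2 hk2m) hk
    have := hbound k2 hk2m
    rw [abs_le] at this
    exact this.2
  set θ1 := Complex.arg (lam b k1)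
  set θ2 := Complex.arg (lam b k2)
  have hΔ : 0 < |θ2 - θ1| := abs_pos.2 (sub_ne_zero.2 (Ne.symm hθne))
  obtain ⟨n0, hn0⟩ := exists_nat_gt ((4 * π + 1) / |θ2 - θ1|)
  have hn0Δ : 4 * π + 1 < n0 * |θ2 - θ1| := by
    rw [div_lt_iff₀ hΔ] at hn0
    linarith
  have hn0pos : 1 ≤ n0 := by
    by_contra hcon
    push_neg at hcon
    interval_cases n0
    simp only [Nat.cast_zero, zero_mul] at hn0Δ
    nlinarith [Real.pi_pos]
  set g : ℝ → ℝ := fun x => Complex.arg ((σ:ℂ) * Acoef b x) + n0 * Complex.arg (lam b x)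
    with hgdef
  have hgcont : ContinuousOn g (Set.Icc k1 k2) :=
    (phi_continuousOn b hdisc σ hsign).add
      (continuousOn_const.mul (theta_continuousOn b hdisc))
  have hφ1 := Complex.abs_arg_le_pi ((σ:ℂ) * Acoef b k1)
  have hφ2 := Complex.abs_arg_le_pi ((σ:ℂ) * Acoef b k2)
  have hgap : 2 * π + 1 < |g k2 - g k1| := by
    set φ1 := Complex.arg ((σ:ℂ) * Acoef b k1) with hφ1def
    set φ2 := Complex.arg ((σ:ℂ) * Acoef b k2) with hφ2def
    have h1 : (n0:ℝ) * (θ2 - θ1) = (g k2 - g k1) - (φ2 - φ1) := by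
      simp only [hgdef]
      ring
    have h2 : |(n0:ℝ) * (θ2 - θ1)| = n0 * |θ2 - θ1| := by
      rw [abs_mul, Nat.abs_cast]
    have h4 : |(n0:ℝ) * (θ2 - θ1)| ≤ |g k2 - g k1| + |φ2 - φ1| := by
      rw [h1]
      calc |(g k2 - g k1) - (φ2 - φ1)| = |(g k2 - g k1) + (-(φ2 - φ1))| := by ring_nf
        _ ≤ |g k2 - g k1| + |(-(φ2 - φ1))| := abs_add_le _ _
        _ = |g k2 - g k1| + |φ2 - φ1| := by rw [abs_neg]
    have h5 : |φ2 - φ1| ≤ 2 * π := by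
      calc |φ2 - φ1| = |φ2 + (-φ1)| := by ring_nf
        _ ≤ |φ2| + |(-φ1)| := abs_add_le _ _
        _ = |φ2| + |φ1| := by rw [abs_neg]
        _ ≤ 2 * π := by linarith [hφ1, hφ2]
    rw [h2] at h4
    linarith
  set L := min (g k1) (g k2) with hLdef
  set U := max (g k1) (g k2) with hUdef
  have hUL : 2 * π + 1 < U - L := by
    have : U - L = |g k2 - g k1| := max_sub_min_eq_abs (g k1) (g k2)
    rw [this]
    exact hgap
  set mi : ℤ := ⌈(L - π / 2) / π⌉
  set v0 : ℝ := π / 2 + mi * π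
  have hπ := Real.pi_pos
  have hv0L : L ≤ v0 := by
    have := Int.le_ceil ((L - π / 2) / π)
    have h' : (L - π / 2) / π * π ≤ (mi:ℝ) * π :=
      mul_le_mul_of_nonneg_right this hπ.le
    rw [div_mul_cancel₀ _ (ne_of_gt hπ)] at h'
    simp only [v0]
    linarith
  have hv0U : v0 ≤ U := by
    have := Int.ceil_lt_add_one ((L - π / 2) / π)
    have h' : (mi:ℝ) * π < ((L - π / 2) / π + 1) * π :=
      mul_lt_mul_of_pos_right this hπ
    rw [add_mul, div_mul_cancel₀ _ (ne_of_gt hπ)] at h'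
    simp only [v0]
    linarith
  have hv0mem : v0 ∈ Set.uIcc (g k1) (g k2) := by
    rw [Set.mem_uIcc]
    rcases le_total (g k1) (g k2) with hle | hle
    · left
      constructor
      · simpa only [L, min_eq_left hle] using hv0L
      · simpa only [U, max_eq_right hle] using hv0U
    · right
      constructor
      · simpa only [L, min_eq_right hle] using hv0L
      · simpa only [U, max_eq_left hle] using hv0U
  have hIvt := intermediate_value_uIcc (by rwa [Set.uIcc_of_le hk.le] : ContinuousOn g (Set.uIcc k1 k2))
  obtain ⟨a, ha, hga⟩ := hIvt hv0mem
  rw [Set.uIcc_of_le hk.le] at ha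
  have hcosv0 : Real.cos v0 = 0 := by
    simp only [v0]
    rw [Real.cos_add, Real.cos_pi_div_two, Real.sin_pi_div_two, zero_mul, one_mul]
    rw [Real.sin_int_mul_pi]
    ring
  refine ⟨n0, a, hn0pos, ha, ?_⟩
  have hzero : wre b a (n0 + 1) = 0 := by
    rw [wre_sigma_cos b (hdisc a ha) σ hσ n0]
    have : Complex.arg ((σ:ℂ) * Acoef b a) + n0 * Complex.arg (lam b a) = v0 := hga
    rw [this, hcosv0]
    ring
  exact hzero

end Analysis2

end Aux

/-- The real roots of chromatic polynomials of bichromatic 2-edge-coloured graphs are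
dense in `ℝ`. -/
theorem bichromatic_real_roots_dense (r : ℝ) (ε : ℝ) (hε : 0 < ε) :
    ∃ (n : ℕ) (R B : SimpleGraph (Fin n)) (P : Polynomial ℚ) (a : ℝ),
      Disjoint R B ∧ R ≠ ⊥ ∧ B ≠ ⊥ ∧
      (∀ k : ℕ, P.eval (k : ℚ) = numColourings R B ⊥ k) ∧
      |r - a| < ε ∧ Polynomial.aeval a P = 0 := by

  have hδpos : 0 < min ε 1 / 2 := by positivity
  set δ := min ε 1 / 2 with hδdef
  have hδε : δ ≤ ε / 2 := by
    rw [hδdef]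
    have : min ε 1 ≤ ε := min_le_left ε 1
    linarith
  have hδ1 : δ ≤ 1 / 2 := by
    rw [hδdef]
    have : min ε 1 ≤ 1 := min_le_right ε 1
    linarith
  set b := ⌈|r|⌉₊ + 3 with hbdef
  have hb : 3 ≤ b := by omega
  have hbr : |r| + 1 ≤ (b : ℝ) - 2 := by
    have h1 := Nat.le_ceil |r|
    have h2 : ((⌈|r|⌉₊ + 3 : ℕ) : ℝ) = (⌈|r|⌉₊ : ℝ) + 3 := by push_cast; ring
    rw [hbdef, h2]
    linarith
  have habs : (0:ℝ) ≤ |r| := abs_nonneg r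
  have hrle : r ≤ |r| := le_abs_self r
  have hrge : -|r| ≤ r := neg_abs_le r
  obtain ⟨k1, k2, hk, hsub, hbound, σ, hσ, hsign⟩ :
      ∃ k1 k2 : ℝ, k1 < k2 ∧ (∀ x ∈ Set.Icc k1 k2, |r - x| < ε) ∧
        (∀ x ∈ Set.Icc k1 k2, |x| ≤ (b : ℝ) - 2) ∧
        ∃ σ : ℝ, (σ = 1 ∨ σ = -1) ∧ ∀ x ∈ Set.Icc k1 k2, 0 < σ * x := by
    rcases le_or_gt 0 r with hr | hr
    · refine ⟨r + δ / 2, r + δ, by linarith, ?_, ?_, 1, Or.inl rfl, ?_⟩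
      · rintro x ⟨h1, h2⟩
        rw [abs_lt]
        constructor <;> linarith
      · rintro x ⟨h1, h2⟩
        rw [abs_le]
        constructor <;> linarith
      · rintro x ⟨h1, h2⟩
        rw [one_mul]
        linarith
    · refine ⟨r - δ, r - δ / 2, by linarith, ?_, ?_, -1, Or.inr rfl, ?_⟩
      · rintro x ⟨h1, h2⟩
        rw [abs_lt]
        constructor <;> linarith
      · rintro x ⟨h1, h2⟩
        rw [abs_le]
        constructor <;> linarith
      · rintro x ⟨h1, h2⟩
        rw [neg_one_mul]
        linarith
  obtain ⟨N, a, hN, haI, hroot⟩ := exists_PW_root b hb k1 k2 hk hbound σ hσ hsign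
  refine ⟨N + 1 + b, RedPathF N b, BlueCliqueF N b, Pfinal b N, a, disjoint_RB N b,
    redF_ne_bot N b hN, blueF_ne_bot N b (by omega), fun k => Pfinal_eval b N k,
    hsub a haI, ?_⟩
  show Polynomial.aeval a (Pfinal b N) = 0
  rw [Pfinal, map_mul, hroot, mul_zero]
end
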